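/- Let J be C², strictly concave on ℝ with J(0) = J(1) = 0, maximizer m ∈ (0,1), and let ρ₋, ρ₊ : [0,T] → [0,1] with (ρ₋(t), ρ₊(t)) outside the critical segment Θ = {(z, z*) : z < m} for a.e. t. Define u(t,x) by: u = ρ₋(t) if ρ₋(t) < m and ρ₊(t) < ρ₋*(t); u = ρ₊(t) if ρ₊(t) > m and ρ₋(t) > ρ₊*(t); u = m if ρ₋(t) ≥ m and ρ₊(t) ≤ m. Then for a.e. t the function x ↦ u(t,x) is constant, and J(u(t,x)) equals sup{J(ρ) : ρ between ρ₊(t) and ρ₋(t)} if ρ₋(t) ≥ ρ₊(t), and inf{J(ρ) : ρ between ρ₋(t) and ρ₊(t)} if ρ₋(t) < ρ₊(t). -/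

import Mathlib

open Set MeasureTheory

theorem quasistatic_stmt19 (J : ℝ → ℝ) (hJ : ContDiff ℝ 2 J)
    (hJ'' : ∀ u : ℝ, deriv (deriv J) u < 0) (h0 : J 0 = 0) (h1 : J 1 = 0)
    (m : ℝ) (hm : m ∈ Set.Ioo (0:ℝ) 1) (hmax : IsMaxOn J (Set.Icc 0 1) m)
    (conj : ℝ → ℝ)
    (hmem : ∀ u ∈ Set.Icc (0:ℝ) 1, conj u ∈ Set.Icc (0:ℝ) 1)
    (hJc : ∀ u ∈ Set.Icc (0:ℝ) 1, J (conj u) = J u)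
    (hne : ∀ u ∈ Set.Icc (0:ℝ) 1, u ≠ m → conj u ≠ u)
    (hmm : conj m = m)
    (T : ℝ) (hT : 0 < T)
    (ρm ρp : ℝ → ℝ)
    (hρ : ∀ t ∈ Set.Icc (0:ℝ) T, ρm t ∈ Set.Icc (0:ℝ) 1 ∧ ρp t ∈ Set.Icc (0:ℝ) 1)
    (hnoncrit : ∀ᵐ t ∂(volume.restrict (Set.Icc (0:ℝ) T)),
      ¬(ρm t < m ∧ ρp t = conj (ρm t)))
    (u : ℝ → ℝ → ℝ)
    (hu1 : ∀ t x, ρm t < m → ρp t < conj (ρm t) → u t x = ρm t)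
    (hu2 : ∀ t x, m < ρp t → conj (ρp t) < ρm t → u t x = ρp t)
    (hu3 : ∀ t x, m ≤ ρm t → ρp t ≤ m → u t x = m) :
    ∀ᵐ t ∂(volume.restrict (Set.Icc (0:ℝ) T)),
      (∀ x y : ℝ, u t x = u t y) ∧
      ∀ x : ℝ,
        (ρp t ≤ ρm t → J (u t x) = sSup (J '' Set.Icc (ρp t) (ρm t))) ∧
        (ρm t < ρp t → J (u t x) = sInf (J '' Set.Icc (ρm t) (ρp t))) := by
  -- basic analytic facts
  have hdiff : Differentiable ℝ J := hJ.differentiable (by norm_num)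
  have hcont : Continuous J := hdiff.continuous
  have hanti : StrictAnti (deriv J) := strictAnti_of_deriv_neg hJ''
  have hm0 : deriv J m = 0 :=
    (hmax.isLocalMax (Icc_mem_nhds hm.1 hm.2)).deriv_eq_zero
  have hmono : StrictMonoOn J (Iic m) := by
    apply strictMonoOn_of_deriv_pos (convex_Iic m) hcont.continuousOn
    intro x hx
    rw [interior_Iic, mem_Iio] at hx
    have := hanti hx
    rwa [hm0] at this
  have hanti' : StrictAntiOn J (Ici m) := by
    apply strictAntiOn_of_deriv_neg (convex_Ici m) hcont.continuousOn
    intro x hx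
    rw [interior_Ici, mem_Ioi] at hx
    have := hanti hx
    rwa [hm0] at this
  -- conjugate points are on the other side of m
  have hconj_lt : ∀ z ∈ Set.Icc (0:ℝ) 1, z < m → m < conj z := by
    intro z hz hzm
    by_contra hle
    push_neg at hle
    have hJz : J (conj z) = J z := hJc z hz
    rcases eq_or_lt_of_le hle with heq | hlt
    · -- conj z = m : impossible since J z < J m
      have : J z < J m := hmono (mem_Iic.mpr hzm.le) (mem_Iic.mpr le_rfl) hzm
      rw [← heq, hJz] at this; exact lt_irrefl _ this
    · -- conj z < m : injectivity on Iic m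
      have hne' := hne z hz (ne_of_lt hzm)
      have := hmono.injOn (mem_Iic.mpr hlt.le) (mem_Iic.mpr hzm.le) hJz
      exact hne' this
  have hconj_gt : ∀ z ∈ Set.Icc (0:ℝ) 1, m < z → conj z < m := by
    intro z hz hzm
    by_contra hle
    push_neg at hle
    have hJz : J (conj z) = J z := hJc z hz
    rcases eq_or_lt_of_le hle with heq | hlt
    · have : J z < J m := hanti' (mem_Ici.mpr le_rfl) (mem_Ici.mpr hzm.le) hzm
      rw [heq, hJz] at this; exact lt_irrefl _ this
    · have hne' := hne z hz (ne_of_gt hzm)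
      have := hanti'.injOn (mem_Ici.mpr hlt.le) (mem_Ici.mpr hzm.le) hJz
      exact hne' this
  -- sSup / sInf helpers
  have hsup : ∀ a b c : ℝ, c ∈ Set.Icc a b → (∀ y ∈ Set.Icc a b, J y ≤ J c) →
      sSup (J '' Set.Icc a b) = J c := by
    intro a b c hc hle
    exact IsGreatest.csSup_eq ⟨mem_image_of_mem J hc, by
      rintro _ ⟨y, hy, rfl⟩; exact hle y hy⟩
  have hinf : ∀ a b c : ℝ, c ∈ Set.Icc a b → (∀ y ∈ Set.Icc a b, J c ≤ J y) →
      sInf (J '' Set.Icc a b) = J c := by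
    intro a b c hc hle
    exact IsLeast.csInf_eq ⟨mem_image_of_mem J hc, by
      rintro _ ⟨y, hy, rfl⟩; exact hle y hy⟩
  filter_upwards [hnoncrit, ae_restrict_mem measurableSet_Icc] with t hcrit htT
  obtain ⟨hρm, hρp⟩ := hρ t htT
  -- Case analysis
  rcases lt_or_ge (ρm t) m with hA | hge
  · -- ρm t < m
    have hconjm : m < conj (ρm t) := hconj_lt _ hρm hA
    rcases lt_trichotomy (ρp t) (conj (ρm t)) with hlt | heq | hgt
    · -- Case A : u = ρm t
      have huv : ∀ x, u t x = ρm t := fun x => hu1 t x hA hlt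
      refine ⟨fun x y => by rw [huv x, huv y], fun x => ?_⟩
      rw [huv x]
      constructor
      · intro hle
        refine (hsup _ _ _ ⟨hle, le_refl _⟩ ?_).symm
        intro y hy
        rcases eq_or_lt_of_le hy.2 with h | h
        · rw [h]
        · exact (hmono (mem_Iic.mpr (h.trans hA).le) (mem_Iic.mpr hA.le) h).le
      · intro hlt'
        refine (hinf _ _ _ ⟨le_refl _, hlt'.le⟩ ?_).symm
        intro y hy
        rcases le_or_gt y m with hym | hym
        · -- increasing part
          rcases eq_or_lt_of_le hy.1 with h | h
          · rw [← h]
          · exact (hmono (mem_Iic.mpr hA.le) (mem_Iic.mpr hym) h).le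
        · -- decreasing part: J y ≥ J (ρp t) > J (conj (ρm t)) = J (ρm t)
          have h1' : J (ρp t) ≤ J y := by
            rcases eq_or_lt_of_le hy.2 with h | h
            · rw [h]
            · exact (hanti' (mem_Ici.mpr hym.le) (mem_Ici.mpr (hym.le.trans hy.2)) h).le
          have h2' : J (conj (ρm t)) < J (ρp t) := by
            have hpm : m < ρp t := hym.trans_le hy.2
            exact hanti' (mem_Ici.mpr hpm.le) (mem_Ici.mpr hconjm.le) hlt
          rw [← hJc _ hρm]
          exact (h2'.le.trans h1')
    · exact absurd ⟨hA, heq⟩ hcrit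
    · -- ρp t > conj (ρm t) > m : Case B
      have hpm : m < ρp t := hconjm.trans hgt
      have hconjp : conj (ρp t) < m := hconj_gt _ hρp hpm
      have hcρ : conj (ρp t) < ρm t := by
        -- J (conj (ρp t)) = J (ρp t) < J (conj (ρm t)) = J (ρm t), all in Iic m
        have h1' : J (ρp t) < J (conj (ρm t)) := by
          have : conj (ρm t) ∈ Set.Icc (0:ℝ) 1 := hmem _ hρm
          exact hanti' (mem_Ici.mpr hconjm.le) (mem_Ici.mpr hpm.le) hgt
        rw [hJc _ hρm] at h1'
        have h2' : J (conj (ρp t)) = J (ρp t) := hJc _ hρp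
        by_contra hle
        push_neg at hle
        rcases eq_or_lt_of_le hle with h | h
        · rw [h, h2'] at h1'; exact lt_irrefl _ h1'
        · have := hmono (mem_Iic.mpr hA.le) (mem_Iic.mpr hconjp.le) h
          rw [h2'] at this
          exact lt_irrefl _ (this.trans h1')
      have huv : ∀ x, u t x = ρp t := fun x => hu2 t x hpm hcρ
      refine ⟨fun x y => by rw [huv x, huv y], fun x => ?_⟩
      rw [huv x]
      constructor
      · intro hle
        refine (hsup _ _ _ ⟨le_refl _, hle⟩ ?_).symm
        intro y hy
        rcases eq_or_lt_of_le hy.1 with h | h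
        · rw [← h]
        · exact (hanti' (mem_Ici.mpr hpm.le) (mem_Ici.mpr (hpm.le.trans hy.1)) h).le
      · intro hlt'
        refine (hinf _ _ _ ⟨hlt'.le, le_refl _⟩ ?_).symm
        intro y hy
        rcases le_or_gt y m with hym | hym
        · -- J y ≥ J (ρm t) > J (conj (ρp t)) = J (ρp t)
          have h1' : J (ρm t) ≤ J y := by
            rcases eq_or_lt_of_le hy.1 with h | h
            · rw [← h]
            · exact (hmono (mem_Iic.mpr hA.le) (mem_Iic.mpr hym) h).le
          have h2' : J (conj (ρp t)) < J (ρm t) :=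
            hmono (mem_Iic.mpr hconjp.le) (mem_Iic.mpr hA.le) hcρ
          rw [← hJc _ hρp]
          exact h2'.le.trans h1'
        · rcases eq_or_lt_of_le hy.2 with h | h
          · rw [h]
          · exact (hanti' (mem_Ici.mpr hym.le) (mem_Ici.mpr (hym.le.trans hy.2)) h).le
  · -- ρm t ≥ m
    rcases le_or_gt (ρp t) m with hC | hpm
    · -- Case C : u = m
      have huv : ∀ x, u t x = m := fun x => hu3 t x hge hC
      refine ⟨fun x y => by rw [huv x, huv y], fun x => ?_⟩
      rw [huv x]
      constructor
      · intro _
        refine (hsup _ _ _ ⟨hC, hge⟩ ?_).symm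
        intro y hy
        exact hmax ⟨hρp.1.trans hy.1, hy.2.trans hρm.2⟩
      · intro hlt'
        exact absurd (hC.trans hge) (not_le.mpr hlt')
    · -- ρp t > m : Case B with conj ρp < m ≤ ρm
      have hconjp : conj (ρp t) < m := hconj_gt _ hρp hpm
      have hcρ : conj (ρp t) < ρm t := hconjp.trans_le hge
      have huv : ∀ x, u t x = ρp t := fun x => hu2 t x hpm hcρ
      refine ⟨fun x y => by rw [huv x, huv y], fun x => ?_⟩
      rw [huv x]
      constructor
      · intro hle
        refine (hsup _ _ _ ⟨le_refl _, hle⟩ ?_).symm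
        intro y hy
        rcases eq_or_lt_of_le hy.1 with h | h
        · rw [← h]
        · exact (hanti' (mem_Ici.mpr hpm.le) (mem_Ici.mpr (hpm.le.trans hy.1)) h).le
      · intro hlt'
        refine (hinf _ _ _ ⟨hlt'.le, le_refl _⟩ ?_).symm
        intro y hy
        rcases eq_or_lt_of_le hy.2 with h | h
        · rw [h]
        · have hym : m ≤ y := hge.trans hy.1
          exact (hanti' (mem_Ici.mpr hym) (mem_Ici.mpr (hym.trans hy.2)) h).le
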